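/- Let λ ∈ ℤ^{r+1} be dominant (λ_1 ≥ … ≥ λ_{r+1}) and effective (λ_{r+1} ≥ 0), let ρ = (r, r−1, …, 1, 0), and let μ = (μ_1,…,μ_r) ∈ ℤ^r interleave with λ+ρ, i.e. (λ+ρ)_j ≥ μ_j ≥ (λ+ρ)_{j+1} for 1 ≤ j ≤ r. Let T be any Gelfand–Tsetlin pattern of rank r with top row λ+ρ and second row μ, let T′ be the rank-(r−1) pattern with top row μ obtained by deleting the top row of T, and let T* be the rank-r pattern with top row λ+ρ and entries a_{i,j} = μ_j for all 1 ≤ i ≤ j ≤ r. Then: (a) wt(T) = (wt(T′), d(λ+ρ) − d(μ)), where d(·) denotes the sum of the coordinates and wt(T′) is the weight of T′ as a rank-(r−1) pattern; (b) G^{(n)}(T) = G^{(n)}(T′)·G^{(n)}(T*), where G^{(n)}(T′) is the degree-n Gelfand–Tsetlin coefficient of the rank-(r−1) pattern T′. -/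

import Mathlib

open scoped BigOperators Classical

noncomputable section

namespace MetaPaper

variable (F : Type) [Field F]

/-- The field of rational functions in `x_1, …, x_{r+1}` over `F`. -/
abbrev K (r : ℕ) : Type := FractionRing (MvPolynomial (Fin (r+1)) F)

variable (r : ℕ)

/-- The variable `x_i` as an element of `K`. -/
def XX (i : Fin (r+1)) : K F r :=
  algebraMap (MvPolynomial (Fin (r+1)) F) (K F r) (MvPolynomial.X i)

/-- A constant from `F` as an element of `K`. -/
def CC (c : F) : K F r :=
  algebraMap (MvPolynomial (Fin (r+1)) F) (K F r) (MvPolynomial.C c)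

/-- The monomial `x^λ = x_1^{λ_1} ⋯ x_{r+1}^{λ_{r+1}}`. -/
def mon (lam : Fin (r+1) → ℤ) : K F r := ∏ i, XX F r i ^ lam i

open Fin.NatCast in
/-- The simple reflection `σ_{i+1}` (0-indexed: swapping coordinates `i` and `i+1`). -/
def sref (i : ℕ) : Equiv.Perm (Fin (r+1)) :=
  Equiv.swap ((i : Fin (r+1))) (((i+1 : ℕ) : Fin (r+1)))

/-- The product of the simple reflections indexed by a word. -/
def wordProd (l : List ℕ) : Equiv.Perm (Fin (r+1)) := (l.map (sref r)).prod

/-- The (Coxeter) length of a permutation: the least length of a word in the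
simple reflections representing it. -/
def plen (u : Equiv.Perm (Fin (r+1))) : ℕ :=
  sInf {m | ∃ l : List ℕ, (∀ i ∈ l, i < r) ∧ l.length = m ∧ wordProd r l = u}

/-- The strong Bruhat order: `u ≤ w` iff `u` is the product of a subword of a
reduced word for `w`. -/
def BruhatLE (u w : Equiv.Perm (Fin (r+1))) : Prop :=
  ∃ l : List ℕ, (∀ i ∈ l, i < r) ∧ wordProd r l = w ∧ l.length = plen r w ∧
    ∃ l' : List ℕ, l'.Sublist l ∧ wordProd r l' = u

/-- The favourite reduced word `σ_1, σ_2 σ_1, σ_3 σ_2 σ_1, …` (0-indexed) for the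
longest element of `S_{m+1}`. -/
def favWord (m : ℕ) : List ℕ := (List.range m).flatMap (fun b => (List.range (b+1)).reverse)

open Fin.NatCast in
/-- `x^{α_i} = x_i / x_{i+1}` (0-indexed `i`). -/
def xalpha (i : ℕ) : K F r := XX F r (i : Fin (r+1)) / XX F r ((i+1 : ℕ) : Fin (r+1))

/-- The sublattice `Λ₀` of exponent vectors whose coordinates are all congruent mod `n`. -/
def Lam0 (n : ℕ) : Set (Fin (r+1) → ℤ) := {lam | ∀ i j, (n : ℤ) ∣ lam i - lam j}

/-- The subfield `K₀` of `K` generated by the monomials `x^λ` with `λ ∈ Λ₀`. -/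
def K0 (n : ℕ) : Subfield (K F r) :=
  Subfield.closure {x | ∃ lam ∈ Lam0 r n, x = mon F r lam}

variable (n : ℕ) (v : F) (g : ℤ → F)

open Fin.NatCast in
/-- Data of the metaplectic (Chinta–Gunnells) action of `W = S_{r+1}` on `K`,
together with the ordinary permutation action, and their defining properties. -/
structure Setup : Type where
  /-- the Chinta–Gunnells action -/
  act : Equiv.Perm (Fin (r+1)) → K F r → K F r
  /-- the ordinary permutation action on `K` -/
  perm : Equiv.Perm (Fin (r+1)) → K F r ≃+* K F r
  perm_X : ∀ w i, perm w (XX F r i) = XX F r (w i)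
  perm_const : ∀ w c, perm w (CC F r c) = CC F r c
  perm_one : ∀ f, perm 1 f = f
  perm_mul : ∀ u w f, perm (u * w) f = perm u (perm w f)
  act_one : ∀ f, act 1 f = f
  act_mul : ∀ u w f, act (u * w) f = act u (act w f)
  act_add : ∀ w f h, act w (f + h) = act w f + act w h
  act_const_mul : ∀ w c f, act w (CC F r c * f) = CC F r c * act w f
  act_simple : ∀ i : ℕ, i < r → ∀ lam : Fin (r+1) → ℤ,
    act (sref r i) (mon F r lam) =
      mon F r (fun j => lam (sref r i j)) / (1 - CC F r v * xalpha F r i ^ (n : ℕ)) *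
        (xalpha F r i ^ (-((lam (((i+1 : ℕ) : Fin (r+1))) - lam ((i : Fin (r+1)))) % (n : ℤ)))
            * (1 - CC F r v)
          - CC F r v * CC F r (g (1 + lam (((i+1 : ℕ) : Fin (r+1))) - lam ((i : Fin (r+1)))))
            * xalpha F r i ^ (1 - (n : ℤ)) * (1 - xalpha F r i ^ (n : ℕ)))
  act_K0 : ∀ i : ℕ, i < r → ∀ h f : K F r, h ∈ K0 F r n →
    act (sref r i) (h * f) = perm (sref r i) h * act (sref r i) f

variable {F r n v g}

/-- The metaplectic Demazure operator `D_i`. -/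
def Dem (S : Setup F r n v g) (i : ℕ) (f : K F r) : K F r :=
  (f - xalpha F r i ^ (n : ℕ) * S.act (sref r i) f) / (1 - xalpha F r i ^ (n : ℕ))

/-- The metaplectic Demazure–Lusztig operator `T_i`. -/
def DL (S : Setup F r n v g) (i : ℕ) (f : K F r) : K F r :=
  (1 - CC F r v * xalpha F r i ^ (n : ℕ)) * Dem S i f - f

/-- `D_{i_1} ⋯ D_{i_l}` for a word `[i_1, …, i_l]`. -/
def DWord (S : Setup F r n v g) : List ℕ → K F r → K F r
  | [] => fun f => f
  | i :: l => fun f => Dem S i (DWord S l f)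

/-- `T_{i_1} ⋯ T_{i_l}` for a word `[i_1, …, i_l]`. -/
def TWord (S : Setup F r n v g) : List ℕ → K F r → K F r
  | [] => fun f => f
  | i :: l => fun f => DL S i (TWord S l f)

/-- `D_u` for `u ∈ W`, via a chosen reduced word for `u` (by the braid relations
this does not depend on the choice). -/
def Dperm (S : Setup F r n v g) (u : Equiv.Perm (Fin (r+1))) : K F r → K F r :=
  if h : ∃ l : List ℕ, (∀ i ∈ l, i < r) ∧ l.length = plen r u ∧ wordProd r l = u
  then DWord S h.choose else id

/-- `T_u` for `u ∈ W`, via a chosen reduced word for `u`. -/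
def Tperm (S : Setup F r n v g) (u : Equiv.Perm (Fin (r+1))) : K F r → K F r :=
  if h : ∃ l : List ℕ, (∀ i ∈ l, i < r) ∧ l.length = plen r u ∧ wordProd r l = u
  then TWord S h.choose else id

variable (F r n v g)

/-- `a : ℕ → ℕ → ℤ` encodes a Gelfand–Tsetlin pattern of rank `m`
(entries `a i j`, `0 ≤ i ≤ j ≤ m`, zero outside this triangle). -/
def IsGT (m : ℕ) (a : ℕ → ℕ → ℤ) : Prop :=
  (∀ i j, (j < i ∨ m < j) → a i j = 0) ∧
  (∀ i j, i ≤ j → j ≤ m → 0 ≤ a i j) ∧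
  (∀ i j, 1 ≤ i → i ≤ j → j ≤ m → a i j ≤ a (i-1) (j-1) ∧ a (i-1) j ≤ a i j)

/-- `d_i`, the sum of the `i`-th row of a pattern. -/
def rowSum (m : ℕ) (a : ℕ → ℕ → ℤ) (i : ℕ) : ℤ := ∑ j ∈ Finset.Icc i m, a i j

/-- The `p`-th coordinate (0-indexed) of the weight `wt(T) = (d_m, d_{m-1}-d_m, …, d_0-d_1)`. -/
def wtN (m : ℕ) (a : ℕ → ℕ → ℤ) (p : ℕ) : ℤ := rowSum m a (m - p) - rowSum m a (m - p + 1)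

/-- The Γ-array of a pattern: `Γ_{i,j} = Σ_{k=j}^{m} (a_{i,k} - a_{i-1,k})`. -/
def GammaArr (m : ℕ) (a : ℕ → ℕ → ℤ) (i j : ℕ) : ℤ :=
  ∑ k ∈ Finset.Icc j m, (a i k - a (i-1) k)

/-- `h♭(a) = 1 - v` if `n ∣ a`, else `0`. -/
def hflat (a : ℤ) : F := if (n : ℤ) ∣ a then 1 - v else 0

/-- `g♭(a) = v · g_a`. -/
def gflat (a : ℤ) : F := v * g a

/-- The factor `g_{ij}(T)` of the degree-`n` Gelfand–Tsetlin coefficient. -/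
def gcoefP (m : ℕ) (a : ℕ → ℕ → ℤ) (i j : ℕ) : F :=
  if GammaArr m a i (j+1) = GammaArr m a i j ∧
      GammaArr m a i j < GammaArr m a i (j+1) + a (i-1) (j-1) - a (i-1) j then 1
  else if GammaArr m a i (j+1) < GammaArr m a i j ∧
      GammaArr m a i j < GammaArr m a i (j+1) + a (i-1) (j-1) - a (i-1) j then
    hflat F n v (GammaArr m a i j)
  else if GammaArr m a i (j+1) < GammaArr m a i j ∧
      GammaArr m a i j = GammaArr m a i (j+1) + a (i-1) (j-1) - a (i-1) j then
    gflat F v g (GammaArr m a i j)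
  else 0

/-- The degree-`n` Gelfand–Tsetlin coefficient `G^{(n)}(T)`. -/
def Gcoef (m : ℕ) (a : ℕ → ℕ → ℤ) : F :=
  ∏ i ∈ Finset.Icc 1 m, ∏ j ∈ Finset.Icc i m, gcoefP F n v g m a i j

/-- `Γ = (Γ_1, …, Γ_m)` (1-indexed, zero outside) is `ν`-admissible. -/
def IsAdm (m : ℕ) (ν Γ : ℕ → ℤ) : Prop :=
  (∀ j, j = 0 ∨ m < j → Γ j = 0) ∧
  ∀ j, 1 ≤ j → j ≤ m → Γ (j+1) ≤ Γ j ∧ Γ j ≤ Γ (j+1) + ν j - ν (j+1) + 1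

/-- `Γ` is `(ν,k)`-admissible. -/
def IsAdmK (m k : ℕ) (ν Γ : ℕ → ℤ) : Prop := IsAdm m ν Γ ∧ ∀ j, k + 1 < j → Γ j = 0

/-- The `p`-th coordinate (0-indexed) of
`wt^{(ν)}(Γ) = (ν_{m+1}+Γ_m, ν_m+Γ_{m-1}-Γ_m, …, ν_1-Γ_1)`. -/
def wtGam (m : ℕ) (ν Γ : ℕ → ℤ) (p : ℕ) : ℤ := ν (m+1-p) + Γ (m-p) - Γ (m-p+1)

/-- The factor `c_j` of `G_1^{(ν)}(Γ)`. -/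
def gamCoef (ν Γ : ℕ → ℤ) (j : ℕ) : F :=
  if Γ (j+1) = Γ j ∧ Γ j < Γ (j+1) + ν j - ν (j+1) + 1 then 1
  else if Γ (j+1) < Γ j ∧ Γ j < Γ (j+1) + ν j - ν (j+1) + 1 then hflat F n v (Γ j)
  else if Γ (j+1) < Γ j ∧ Γ j = Γ (j+1) + ν j - ν (j+1) + 1 then gflat F v g (Γ j)
  else 0

/-- `G_1^{(ν)}(Γ)`. -/
def G1 (m : ℕ) (ν Γ : ℕ → ℤ) : F := ∏ j ∈ Finset.Icc 1 m, gamCoef F n v g ν Γ j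

/-- The top row `λ + ρ` of a pattern, as a function `ℕ → ℤ` (0-indexed columns). -/
def topRowOf (lam : Fin (r+1) → ℤ) : ℕ → ℤ :=
  fun j => if h : j ≤ r then lam ⟨j, by omega⟩ + ((r : ℤ) - (j : ℤ)) else 0

/-- The weight `λ` reread as a 1-indexed function `ℕ → ℤ` (`ν_j = λ_j`). -/
def nuOf (lam : Fin (r+1) → ℤ) : ℕ → ℤ :=
  fun j => if h : 1 ≤ j ∧ j ≤ r + 1 then lam ⟨j - 1, by omega⟩ else 0

/-- Dominance: `λ_1 ≥ λ_2 ≥ … `. -/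
def Dominant (m : ℕ) (lam : Fin m → ℤ) : Prop := ∀ i j : Fin m, i ≤ j → lam j ≤ lam i

/-- Position of `Γ_{i,j}` in the reading `b_1, b_2, …` of the Γ-array
(rows bottom to top, each row left to right). -/
def bpos (m i j : ℕ) : ℕ := (m - i) * (m - i + 1) / 2 + (j - i + 1)


/-- `δ(A,B) = h♭(A)` if `A < B`, `h♭(A) - 1` if `A = B`, `0` if `A > B`. -/
def deltaHG (A B : ℤ) : F :=
  if A < B then hflat F n v A else if A = B then hflat F n v A - 1 else 0


/-- branching of weights and Gelfand–Tsetlin coefficients: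
for a pattern `T` with top row `λ+ρ` and second row `μ`, deleting the top row gives
`T'` and the "lowest" pattern `T*` has all lower rows equal to `μ`; then
`wt(T) = (wt(T'), d(λ+ρ) - d(μ))` and `G^{(n)}(T) = G^{(n)}(T') · G^{(n)}(T*)`. -/
theorem statement11 (r n : ℕ) (hr : 1 ≤ r) (hn : 1 ≤ n) (v : ℂ) (g : ℤ → ℂ)
    (hv : v ≠ 0)
    (hgper : ∀ i j : ℤ, i % (n : ℤ) = j % (n : ℤ) → g i = g j)
    (hg0 : g 0 = -1)
    (hginv : ∀ i : ℤ, 1 ≤ i → i ≤ (n : ℤ) - 1 → g i * g ((n : ℤ) - i) = v⁻¹)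
    (lam : Fin (r+1) → ℤ) (hdom : Dominant (r+1) lam) (heff : 0 ≤ lam (Fin.last r))
    (μ : ℕ → ℤ)
    (hint : ∀ j : ℕ, 1 ≤ j → j ≤ r → topRowOf r lam j ≤ μ j ∧ μ j ≤ topRowOf r lam (j-1))
    (T : ℕ → ℕ → ℤ) (hT : IsGT r T)
    (htop : ∀ j, T 0 j = topRowOf r lam j)
    (hsec : ∀ j, 1 ≤ j → j ≤ r → T 1 j = μ j)
    (T' : ℕ → ℕ → ℤ) (hT' : ∀ i j, T' i j = T (i+1) (j+1))
    (Tstar : ℕ → ℕ → ℤ)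
    (hstar : ∀ i j, Tstar i j =
      if i = 0 then topRowOf r lam j
      else if 1 ≤ i ∧ i ≤ j ∧ j ≤ r then μ j else 0) :
    ((∀ p : ℕ, p ≤ r - 1 → wtN r T p = wtN (r-1) T' p) ∧
      wtN r T r
        = (∑ j ∈ Finset.range (r+1), topRowOf r lam j) - ∑ j ∈ Finset.Icc 1 r, μ j) ∧
    Gcoef ℂ n v g r T = Gcoef ℂ n v g (r-1) T' * Gcoef ℂ n v g r Tstar := by
  obtain ⟨hz, hnn, hineq⟩ := hT
  -- shift lemmas for sums and products over Icc
  have hshiftZ : ∀ (f : ℕ → ℤ) (a b : ℕ),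
      (∑ k ∈ Finset.Icc (a+1) (b+1), f k) = ∑ k ∈ Finset.Icc a b, f (k+1) := by
    intro f a b
    rw [← Finset.map_add_right_Icc a b 1, Finset.sum_map]
    rfl
  have hshiftC : ∀ (f : ℕ → ℂ) (a b : ℕ),
      (∏ k ∈ Finset.Icc (a+1) (b+1), f k) = ∏ k ∈ Finset.Icc a b, f (k+1) := by
    intro f a b
    rw [← Finset.map_add_right_Icc a b 1, Finset.prod_map]
    rfl
  -- row sums of T' are row sums of T
  have hrow : ∀ i, rowSum (r-1) T' i = rowSum r T (i+1) := by
    intro i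
    unfold rowSum
    have h1 : (∑ j ∈ Finset.Icc i (r-1), T' i j)
        = ∑ j ∈ Finset.Icc i (r-1), T (i+1) (j+1) :=
      Finset.sum_congr rfl (fun j _ => hT' i j)
    rw [h1, ← hshiftZ (fun k => T (i+1) k) i (r-1)]
    have : r - 1 + 1 = r := by omega
    rw [this]
  constructor
  · constructor
    · -- part (a), first clause
      intro p hp
      unfold wtN
      rw [hrow, hrow]
      have e1 : r - 1 - p + 1 = r - p := by omega
      have e2 : r - 1 - p + 1 + 1 = r - p + 1 := by omega
      rw [e1]
    · -- part (a), second clause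
      unfold wtN rowSum
      have e0 : r - r = 0 := by omega
      rw [e0]
      have h0 : Finset.Icc 0 r = Finset.range (r+1) := by
        ext x; simp [Finset.mem_Icc, Finset.mem_range]
      have h1 : (∑ j ∈ Finset.Icc 0 r, T 0 j)
          = ∑ j ∈ Finset.range (r+1), topRowOf r lam j := by
        rw [h0]; exact Finset.sum_congr rfl (fun j _ => htop j)
      have h2 : (∑ j ∈ Finset.Icc (0+1) r, T (0+1) j) = ∑ j ∈ Finset.Icc 1 r, μ j := by
        refine Finset.sum_congr rfl (fun j hj => ?_)
        rw [Finset.mem_Icc] at hj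
        exact hsec j hj.1 hj.2
      rw [h1, h2]
  -- part (b)
  -- Gamma array transfer T' → T
  have hgamT' : ∀ i j, 1 ≤ i →
      GammaArr (r-1) T' i j = GammaArr r T (i+1) (j+1) := by
    intro i j hi
    unfold GammaArr
    have h1 : (∑ k ∈ Finset.Icc j (r-1), (T' i k - T' (i-1) k))
        = ∑ k ∈ Finset.Icc j (r-1), (T (i+1) (k+1) - T ((i+1)-1) (k+1)) := by
      refine Finset.sum_congr rfl (fun k _ => ?_)
      rw [hT' i k, hT' (i-1) k]
      have : i - 1 + 1 = i := by omega
      rw [this]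
      norm_num
    rw [h1, ← hshiftZ (fun k => T (i+1) k - T ((i+1)-1) k) j (r-1)]
    have : r - 1 + 1 = r := by omega
    rw [this]
  -- gcoefP transfer T' → T
  have hgc : ∀ i j, 1 ≤ i → 1 ≤ j →
      gcoefP ℂ n v g (r-1) T' i j = gcoefP ℂ n v g r T (i+1) (j+1) := by
    intro i j hi hj
    unfold gcoefP
    rw [hgamT' i (j+1) hi, hgamT' i j hi]
    have e1 : T' (i-1) (j-1) = T ((i+1)-1) ((j+1)-1) := by
      rw [hT' (i-1) (j-1)]
      have h1 : i - 1 + 1 = i := by omega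
      have h2 : j - 1 + 1 = j := by omega
      rw [h1, h2]
      norm_num
    have e2 : T' (i-1) j = T ((i+1)-1) (j+1) := by
      rw [hT' (i-1) j]
      have h1 : i - 1 + 1 = i := by omega
      rw [h1]
      norm_num
    rw [e1, e2]
  -- split of the outer product at i = 1
  have hsplit : Finset.Icc 1 r = insert 1 (Finset.Icc 2 r) := by
    ext x; simp only [Finset.mem_insert, Finset.mem_Icc]; omega
  have hnotmem : (1 : ℕ) ∉ Finset.Icc 2 r := by simp
  -- A : top-row factors, B : the rest
  set A : ℂ := ∏ j ∈ Finset.Icc 1 r, gcoefP ℂ n v g r T 1 j with hA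
  set B : ℂ := ∏ i ∈ Finset.Icc 2 r, ∏ j ∈ Finset.Icc i r, gcoefP ℂ n v g r T i j with hB
  have hGT : Gcoef ℂ n v g r T = A * B := by
    unfold Gcoef
    rw [hsplit, Finset.prod_insert hnotmem]
  -- B equals Gcoef of T'
  have hBT' : Gcoef ℂ n v g (r-1) T' = B := by
    unfold Gcoef
    rw [hB]
    have hout : (∏ i ∈ Finset.Icc 2 r, ∏ j ∈ Finset.Icc i r, gcoefP ℂ n v g r T i j)
        = ∏ i ∈ Finset.Icc 1 (r-1), ∏ j ∈ Finset.Icc (i+1) r, gcoefP ℂ n v g r T (i+1) j := by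
      have : Finset.Icc 2 r = Finset.Icc (1+1) ((r-1)+1) := by
        congr 1; omega
      rw [this, hshiftC (fun i => ∏ j ∈ Finset.Icc i r, gcoefP ℂ n v g r T i j) 1 (r-1)]
    rw [hout]
    refine Finset.prod_congr rfl (fun i hi => ?_)
    rw [Finset.mem_Icc] at hi
    have : Finset.Icc (i+1) r = Finset.Icc (i+1) ((r-1)+1) := by congr 1; omega
    rw [this, hshiftC (fun j => gcoefP ℂ n v g r T (i+1) j) i (r-1)]
    exact Finset.prod_congr rfl (fun j hj => by
      rw [Finset.mem_Icc] at hj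
      exact hgc i j hi.1 (le_trans hi.1 hj.1))
  -- Gamma of T at row 1 equals Gamma of Tstar at row 1
  have hgam1 : ∀ j, 1 ≤ j → GammaArr r T 1 j = GammaArr r Tstar 1 j := by
    intro j hj
    unfold GammaArr
    refine Finset.sum_congr rfl (fun k hk => ?_)
    rw [Finset.mem_Icc] at hk
    have hk1 : 1 ≤ k := le_trans hj hk.1
    rw [hsec k hk1 hk.2, htop k, hstar 1 k, hstar 0 k]
    rw [if_neg (by omega), if_pos (by omega), if_pos rfl]
  -- Gamma of Tstar vanishes in rows i ≥ 2
  have hgam0 : ∀ i j, 2 ≤ i → i ≤ j → GammaArr r Tstar i j = 0 := by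
    intro i j hi hij
    unfold GammaArr
    refine Finset.sum_eq_zero (fun k hk => ?_)
    rw [Finset.mem_Icc] at hk
    rw [hstar i k, hstar (i-1) k]
    rw [if_neg (by omega), if_pos (by constructor; omega; constructor; omega; omega),
      if_neg (by omega), if_pos (by constructor; omega; constructor; omega; omega)]
    ring
  -- the top-row factors of T and Tstar agree
  have hAeq : A = ∏ j ∈ Finset.Icc 1 r, gcoefP ℂ n v g r Tstar 1 j := by
    rw [hA]
    refine Finset.prod_congr rfl (fun j hj => ?_)
    rw [Finset.mem_Icc] at hj
    unfold gcoefP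
    rw [hgam1 (j+1) (by omega), hgam1 j hj.1]
    have e1 : T (1-1) (j-1) = Tstar (1-1) (j-1) := by
      norm_num
      rw [htop (j-1), hstar 0 (j-1), if_pos rfl]
    have e2 : T (1-1) j = Tstar (1-1) j := by
      norm_num
      rw [htop j, hstar 0 j, if_pos rfl]
    rw [e1, e2]
  -- Gcoef of Tstar splits the same way
  set Bstar : ℂ := ∏ i ∈ Finset.Icc 2 r, ∏ j ∈ Finset.Icc i r, gcoefP ℂ n v g r Tstar i j
    with hBstar
  have hGTstar : Gcoef ℂ n v g r Tstar = A * Bstar := by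
    unfold Gcoef
    rw [hsplit, Finset.prod_insert hnotmem, hAeq]
  -- μ is weakly decreasing on [1, r]
  have hmono : ∀ j, 2 ≤ j → j ≤ r → μ j ≤ μ (j-1) := by
    intro j h2 hjr
    have ha := (hint j (by omega) hjr).2
    have hb := (hint (j-1) (by omega) (by omega)).1
    omega
  rw [hGT, hBT'.symm, hGTstar, hBT']
  by_cases hdeg : ∃ j, 2 ≤ j ∧ j ≤ r ∧ μ (j-1) = μ j
  · -- degenerate case: B = 0
    obtain ⟨j0, hj2, hjr, hjeq⟩ := hdeg
    have hB0 : B = 0 := by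
      rw [hB]
      refine Finset.prod_eq_zero (Finset.mem_Icc.2 ⟨le_refl 2, by omega⟩) ?_
      refine Finset.prod_eq_zero (Finset.mem_Icc.2 ⟨hj2, hjr⟩) ?_
      -- show gcoefP ℂ n v g r T 2 j0 = 0
      have hT1a : T 1 (j0-1) = μ (j0-1) := hsec (j0-1) (by omega) (by omega)
      have hT1b : T 1 j0 = μ j0 := hsec j0 (by omega) hjr
      have hpinch := hineq 2 j0 (by omega) (by omega) hjr
      have h21 : (2:ℕ) - 1 = 1 := rfl
      rw [h21] at hpinch
      have hT2 : T 2 j0 = T 1 j0 := by omega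
      have hins : Finset.Icc j0 r = insert j0 (Finset.Icc (j0+1) r) := by
        ext x; simp only [Finset.mem_insert, Finset.mem_Icc]; omega
      have hΓ : GammaArr r T 2 j0 = GammaArr r T 2 (j0+1) := by
        unfold GammaArr
        rw [hins, Finset.sum_insert (by simp)]
        rw [h21, hT2]
        ring
      unfold gcoefP
      rw [h21, hΓ, hT1a, hT1b, hjeq]
      rw [if_neg (by omega), if_neg (by omega), if_neg (by omega)]
    rw [hB0]; ring
  · -- nondegenerate case: Bstar = 1
    push_neg at hdeg
    have hBs1 : Bstar = 1 := by
      rw [hBstar]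
      refine Finset.prod_eq_one (fun i hi => Finset.prod_eq_one (fun j hj => ?_))
      rw [Finset.mem_Icc] at hi hj
      have hstrict : μ j < μ (j-1) := by
        have h2j : 2 ≤ j := le_trans hi.1 hj.1
        have := hmono j h2j hj.2
        have := hdeg j h2j hj.2
        omega
      unfold gcoefP
      rw [hgam0 i (j+1) hi.1 (by omega), hgam0 i j hi.1 hj.1]
      have e1 : Tstar (i-1) (j-1) = μ (j-1) := by
        rw [hstar (i-1) (j-1), if_neg (by omega), if_pos (by
          refine ⟨by omega, by omega, by omega⟩)]
      have e2 : Tstar (i-1) j = μ j := by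
        rw [hstar (i-1) j, if_neg (by omega), if_pos (by
          refine ⟨by omega, by omega, by omega⟩)]
      rw [e1, e2, if_pos ⟨rfl, by omega⟩]
    rw [hBs1]; ring

end MetaPaper
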